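/- (Energy dissipation identity, formal) Let ρ^± : 𝕋² × [0,T) → ℝ be smooth solutions of ∂ρ^±/∂t = ∓(R₁²R₂²(ρ⁺−ρ⁻)) ∂ρ^±/∂x₁ with ∂ρ^±/∂x₁ ≥ 0, where ρ^± − L x₁ is ℤ²-periodic. Set ρ = ρ⁺ − ρ⁻ (ℤ²-periodic). Then (1/2)∫_{𝕋²}(R₁R₂ρ(·,t))² + ∫₀ᵗ∫_{𝕋²}(R₁²R₂²ρ)²(∂ρ⁺/∂x₁ + ∂ρ⁻/∂x₁) ≤ (1/2)∫_{𝕋²}(R₁R₂ρ(·,0))²; i.e. the elastic energy (1/2)‖R₁R₂ρ‖²_{L²} is nonincreasing in time. -/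

import Mathlib

open MeasureTheory Complex

noncomputable section

/-- The two-dimensional torus `𝕋² = ℝ²/ℤ²`. -/
abbrev T2 := UnitAddCircle × UnitAddCircle

/-- The Fourier coefficient `c_k(f) = ∫_{𝕋²} f(x) e^{-2πi k·x} dx`. -/
noncomputable def fc (f : T2 → ℂ) (k : ℤ × ℤ) : ℂ :=
  ∫ x : T2, (fourier (-k.1) x.1) * (fourier (-k.2) x.2) * f x

/-- `|k| = √(k₁² + k₂²)`. -/
noncomputable def kabs (k : ℤ × ℤ) : ℝ := Real.sqrt ((k.1:ℝ)^2 + (k.2:ℝ)^2)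

/-- The symbol `k_i/|k|` of the `i`-th Riesz transform (vanishing at `k = 0`). -/
noncomputable def rieszSymbol (i : Fin 2) (k : ℤ × ℤ) : ℝ :=
  if k = 0 then 0 else (if i = 0 then (k.1:ℝ) else (k.2:ℝ)) / kabs k

/-- `Rf` is the `i`-th Riesz transform of `f`:
`c_k(R_i f) = (k_i/|k|) c_k(f)` for `k ≠ 0` and `c_0(R_i f) = 0`. -/
def IsRiesz (i : Fin 2) (f Rf : T2 → ℂ) : Prop :=
  ∀ k : ℤ × ℤ, fc Rf k = (rieszSymbol i k : ℂ) * fc f k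

/-- The Fourier coefficient of a real-valued function on `𝕋²`. -/
noncomputable def fcR (f : T2 → ℝ) (k : ℤ × ℤ) : ℂ := fc (fun x => (f x : ℂ)) k

/-- The canonical projection `ℝ² → 𝕋²`. -/
noncomputable def pr (x : ℝ × ℝ) : T2 := ((x.1 : UnitAddCircle), (x.2 : UnitAddCircle))

namespace T2F

open Submodule Set AddCircle ContinuousMap
open scoped ComplexConjugate ENNReal

theorem vol_eq : (volume : Measure UnitAddCircle) = AddCircle.haarAddCircle := by
  rw [AddCircle.volume_eq_smul_haarAddCircle]; simp

instance : IsProbabilityMeasure (volume : Measure UnitAddCircle) := by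
  rw [vol_eq]; infer_instance

theorem cont_integrable {E : Type*} [NormedAddCommGroup E] {f : T2 → E} (hf : Continuous f) :
    Integrable f (volume : Measure T2) :=
  hf.integrable_of_hasCompactSupport (HasCompactSupport.of_compactSpace _)

noncomputable def eT2 (k : ℤ × ℤ) : C(T2, ℂ) :=
  ((fourier k.1).comp ⟨Prod.fst, continuous_fst⟩) * ((fourier k.2).comp ⟨Prod.snd, continuous_snd⟩)

lemma eT2_apply (k : ℤ × ℤ) (x : T2) : eT2 k x = fourier k.1 x.1 * fourier k.2 x.2 := rfl

lemma eT2_zero : eT2 0 = 1 := by ext x; simp [eT2_apply, fourier_zero]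

lemma eT2_add (j k : ℤ × ℤ) : eT2 (j + k) = eT2 j * eT2 k := by
  ext x
  simp only [eT2_apply, ContinuousMap.mul_apply, Prod.fst_add, Prod.snd_add, fourier_add]
  ring

lemma eT2_conj (k : ℤ × ℤ) (x : T2) : (starRingEnd ℂ) (eT2 k x) = eT2 (-k) x := by
  simp [eT2_apply, ← fourier_neg, map_mul]

noncomputable def eSubalgebra : StarSubalgebra ℂ C(T2, ℂ) where
  toSubalgebra := Algebra.adjoin ℂ (range eT2)
  star_mem' := by
    show Algebra.adjoin ℂ (range eT2) ≤ star (Algebra.adjoin ℂ (range eT2))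
    refine Algebra.adjoin_le ?_
    rintro - ⟨n, rfl⟩
    refine Algebra.subset_adjoin ⟨-n, ?_⟩
    ext1 x
    show eT2 (-n) x = (starRingEnd ℂ) (eT2 n x)
    rw [eT2_conj]

theorem eSubalgebra_coe :
    Subalgebra.toSubmodule eSubalgebra.toSubalgebra = span ℂ (range eT2) := by
  apply Algebra.adjoin_eq_span_of_subset
  refine Subset.trans ?_ Submodule.subset_span
  intro x hx
  refine Submonoid.closure_induction (fun _ => id) ⟨0, eT2_zero⟩ ?_ hx
  rintro - - - - ⟨m, rfl⟩ ⟨n, rfl⟩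
  exact ⟨m + n, eT2_add m n⟩

theorem eSubalgebra_separatesPoints : eSubalgebra.SeparatesPoints := by
  intro x y hxy
  have h1 : x.1 ≠ y.1 ∨ x.2 ≠ y.2 := by
    by_contra h
    push_neg at h
    exact hxy (Prod.ext h.1 h.2)
  rcases h1 with h | h
  · refine ⟨_, ⟨eT2 (1, 0), Algebra.subset_adjoin ⟨(1,0), rfl⟩, rfl⟩, ?_⟩
    simp only [eT2_apply, fourier_zero, mul_one]
    rw [fourier_one, fourier_one]
    intro hc
    rw [Circle.coe_inj] at hc
    exact h (injective_toCircle one_ne_zero hc)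
  · refine ⟨_, ⟨eT2 (0, 1), Algebra.subset_adjoin ⟨(0,1), rfl⟩, rfl⟩, ?_⟩
    simp only [eT2_apply, fourier_zero, one_mul]
    rw [fourier_one, fourier_one]
    intro hc
    rw [Circle.coe_inj] at hc
    exact h (injective_toCircle one_ne_zero hc)

theorem span_eT2_closure_eq_top : (span ℂ (range eT2)).topologicalClosure = ⊤ := by
  rw [← eSubalgebra_coe]
  exact congr_arg (Subalgebra.toSubmodule <| StarSubalgebra.toSubalgebra ·)
    (ContinuousMap.starSubalgebra_topologicalClosure_eq_top_of_separatesPoints eSubalgebra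
      eSubalgebra_separatesPoints)

local notation "⟪" x ", " y "⟫" => @inner ℂ (Lp ℂ 2 (volume : Measure T2)) _ x y

noncomputable abbrev eLp (k : ℤ × ℤ) : Lp ℂ 2 (volume : Measure T2) :=
  ContinuousMap.toLp (E := ℂ) 2 (volume : Measure T2) ℂ (eT2 k)

theorem span_eLp_closure_eq_top :
    (span ℂ (range eLp)).topologicalClosure = ⊤ := by
  convert (ContinuousMap.toLp_denseRange ℂ (volume : Measure T2) ℂ
      (by norm_num : (2 : ℝ≥0∞) ≠ ∞)).topologicalClosure_map_submodule span_eT2_closure_eq_top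
  · rfl
  erw [map_span, range_comp]
  simp only [ContinuousLinearMap.coe_coe]

theorem integral_fourier_unit (n : ℤ) :
    (∫ x : UnitAddCircle, fourier n x) = if n = 0 then 1 else 0 := by
  rw [vol_eq]
  split_ifs with h
  · subst h
    have : ⇑(fourier 0 : C(UnitAddCircle, ℂ)) = fun _ => 1 := by ext1; exact fourier_zero
    rw [this, integral_const, probReal_univ, one_smul]
  · exact integral_eq_zero_of_add_right_eq_neg
      (fourier_add_half_inv_index h (Fact.out : (0:ℝ) < 1))

theorem integral_eT2 (k : ℤ × ℤ) :
    (∫ x : T2, eT2 k x) = if k = 0 then 1 else 0 := by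
  have h : (∫ x : T2, eT2 k x) =
      (∫ x : UnitAddCircle, fourier k.1 x) * ∫ x : UnitAddCircle, fourier k.2 x := by
    simp only [eT2_apply]
    exact integral_prod_mul (fun x => fourier k.1 x) (fun x => fourier k.2 x)
  rw [h, integral_fourier_unit, integral_fourier_unit]
  rcases eq_or_ne k 0 with rfl | hk
  · simp
  · rw [if_neg hk]
    rcases (not_and_or.mp (fun h : k.1 = 0 ∧ k.2 = 0 => hk (Prod.ext h.1 h.2))) with h | h
    · rw [if_neg h, zero_mul]
    · rw [if_neg h, mul_zero]

theorem orthonormal_eT2 : Orthonormal ℂ eLp := by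
  rw [orthonormal_iff_ite]
  intro i j
  rw [ContinuousMap.inner_toLp (volume : Measure T2) (eT2 i) (eT2 j)]
  have h1 : ∀ x : T2, conj (eT2 i x) * eT2 j x = eT2 (j - i) x := by
    intro x
    rw [eT2_conj, ← ContinuousMap.mul_apply, ← eT2_add]
    congr 2
    abel
  calc (∫ x : T2, eT2 j x * conj (eT2 i x)) = ∫ x : T2, eT2 (j - i) x := by
        simp_rw [mul_comm (eT2 j _), h1]
    _ = if i = j then 1 else 0 := by
        rw [integral_eT2]
        simp [sub_eq_zero, eq_comm]

noncomputable def basisT2 : HilbertBasis (ℤ × ℤ) ℂ (Lp ℂ 2 (volume : Measure T2)) :=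
  HilbertBasis.mk orthonormal_eT2 span_eLp_closure_eq_top.ge

theorem basisT2_apply : ⇑basisT2 = eLp :=
  HilbertBasis.coe_mk _ _

theorem inner_eLp_toLp (k : ℤ × ℤ) (f : C(T2, ℂ)) :
    ⟪eLp k, ContinuousMap.toLp (E := ℂ) 2 (volume : Measure T2) ℂ f⟫ = fc (⇑f) k := by
  rw [ContinuousMap.inner_toLp]
  show _ = ∫ x : T2, (fourier (-k.1) x.1) * (fourier (-k.2) x.2) * f x
  congr 1
  funext x
  rw [eT2_conj]
  simp only [eT2_apply, Prod.fst_neg, Prod.snd_neg]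
  ring

theorem pairing (f g : C(T2, ℂ)) :
    (∫ x : T2, conj (f x) * g x) = ∑' k : ℤ × ℤ, conj (fc (⇑f) k) * fc (⇑g) k := by
  have h := basisT2.tsum_inner_mul_inner (ContinuousMap.toLp (E := ℂ) 2 (volume : Measure T2) ℂ f)
    (ContinuousMap.toLp (E := ℂ) 2 (volume : Measure T2) ℂ g)
  rw [ContinuousMap.inner_toLp] at h
  simp_rw [mul_comm (g _)] at h
  rw [← h]
  congr 1
  funext k
  have hb : basisT2 k = eLp k := by rw [basisT2_apply]
  rw [hb, inner_eLp_toLp, ← inner_eLp_toLp k f, inner_conj_symm]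

theorem pairing_real (F G : T2 → ℝ) (hF : Continuous F) (hG : Continuous G) :
    ((∫ x : T2, F x * G x : ℝ) : ℂ) = ∑' k : ℤ × ℤ, conj (fcR F k) * fcR G k := by
  have h := pairing ⟨fun x => (F x : ℂ), Complex.continuous_ofReal.comp hF⟩
                    ⟨fun x => (G x : ℂ), Complex.continuous_ofReal.comp hG⟩
  simp only [ContinuousMap.coe_mk] at h
  simp only [fcR]
  have hcast : ((∫ x : T2, F x * G x : ℝ) : ℂ) = ∫ x : T2, ((F x * G x : ℝ) : ℂ) :=
    integral_ofReal.symm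
  rw [← h, hcast]
  congr 1
  funext x
  rw [Complex.ofReal_mul, Complex.conj_ofReal]

theorem pairing_transfer (F1 F2 G1 G2 : T2 → ℝ)
    (h1 : Continuous F1) (h2 : Continuous F2) (h3 : Continuous G1) (h4 : Continuous G2)
    (h : ∀ k : ℤ × ℤ, conj (fcR F1 k) * fcR F2 k = conj (fcR G1 k) * fcR G2 k) :
    (∫ x : T2, F1 x * F2 x) = ∫ x : T2, G1 x * G2 x := by
  have e1 := pairing_real F1 F2 h1 h2
  have e2 := pairing_real G1 G2 h3 h4
  have e3 : ((∫ x : T2, F1 x * F2 x : ℝ) : ℂ) = ((∫ x : T2, G1 x * G2 x : ℝ) : ℂ) := by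
    rw [e1, e2]
    exact tsum_congr h
  exact_mod_cast e3

theorem eCont (k : ℤ × ℤ) :
    Continuous fun x : T2 => (fourier (-k.1) x.1 : ℂ) * fourier (-k.2) x.2 :=
  ((map_continuous (fourier (-k.1))).comp continuous_fst).mul
    ((map_continuous (fourier (-k.2))).comp continuous_snd)

theorem fcR_add (f g : T2 → ℝ) (hf : Continuous f) (hg : Continuous g) (k : ℤ × ℤ) :
    fcR (fun x => f x + g x) k = fcR f k + fcR g k := by
  simp only [fcR, fc]
  have hif : Integrable (fun x : T2 => (fourier (-k.1)) x.1 * (fourier (-k.2)) x.2 * ((f x : ℝ) : ℂ))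
      volume := cont_integrable ((eCont k).mul (Complex.continuous_ofReal.comp hf))
  have hig : Integrable (fun x : T2 => (fourier (-k.1)) x.1 * (fourier (-k.2)) x.2 * ((g x : ℝ) : ℂ))
      volume := cont_integrable ((eCont k).mul (Complex.continuous_ofReal.comp hg))
  rw [← integral_add hif hig]
  congr 1
  funext x
  push_cast
  ring

theorem fcR_sub (f g : T2 → ℝ) (hf : Continuous f) (hg : Continuous g) (k : ℤ × ℤ) :
    fcR (fun x => f x - g x) k = fcR f k - fcR g k := by
  simp only [fcR, fc]
  have hif : Integrable (fun x : T2 => (fourier (-k.1)) x.1 * (fourier (-k.2)) x.2 * ((f x : ℝ) : ℂ))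
      volume := cont_integrable ((eCont k).mul (Complex.continuous_ofReal.comp hf))
  have hig : Integrable (fun x : T2 => (fourier (-k.1)) x.1 * (fourier (-k.2)) x.2 * ((g x : ℝ) : ℂ))
      volume := cont_integrable ((eCont k).mul (Complex.continuous_ofReal.comp hg))
  rw [← integral_sub hif hig]
  congr 1
  funext x
  push_cast
  ring

theorem pr_surj : Function.Surjective pr := by
  rintro ⟨y1, y2⟩
  rcases QuotientAddGroup.mk_surjective y1 with ⟨a, ha⟩
  rcases QuotientAddGroup.mk_surjective y2 with ⟨b, hb⟩
  exact ⟨(a, b), Prod.ext ha hb⟩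

theorem cont_param_integral (F : ℝ → T2 → ℝ)
    (hF : Continuous fun q : ℝ × T2 => F q.1 q.2) :
    Continuous fun s => ∫ y : T2, F s y := by
  rw [continuous_iff_continuousAt]
  intro s₀
  obtain ⟨C, hC⟩ := ((isCompact_Icc (a := s₀ - 1) (b := s₀ + 1)).prod
    isCompact_univ).exists_bound_of_continuousOn hF.continuousOn
  apply MeasureTheory.continuousAt_of_dominated (bound := fun _ : T2 => C)
  · exact Filter.Eventually.of_forall fun s =>
      (hF.comp (Continuous.prodMk_right s)).aestronglyMeasurable
  · filter_upwards [Icc_mem_nhds (by linarith : s₀ - 1 < s₀) (by linarith : s₀ < s₀ + 1)]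
      with s hs
    exact Filter.Eventually.of_forall fun y => hC (s, y) ⟨hs, Set.mem_univ _⟩
  · exact integrable_const _
  · exact Filter.Eventually.of_forall fun y =>
      (hF.comp (continuous_id.prodMk continuous_const)).continuousAt

end T2F


/-- **Energy dissipation inequality (formal)** for the Groma–Balogh system:
if `ρ^±` are smooth solutions of `∂ρ^±/∂t = ∓(R₁²R₂²(ρ⁺−ρ⁻)) ∂ρ^±/∂x₁` with
`∂ρ^±/∂x₁ ≥ 0` and `ρ^± − Lx₁` is `ℤ²`-periodic, then with `ρ = ρ⁺ − ρ⁻`: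
`(1/2)∫(R₁R₂ρ(·,t))² + ∫₀ᵗ∫ (R₁²R₂²ρ)² (∂ρ⁺/∂x₁ + ∂ρ⁻/∂x₁)
  ≤ (1/2)∫(R₁R₂ρ(·,0))²`,
i.e. the elastic energy is nonincreasing in time. -/
theorem energy_dissipation
    (T L : ℝ) (hT : 0 < T) (hL : 0 < L)
    (ρp ρm ρpt ρmt : ℝ → ℝ × ℝ → ℝ)
    (ρT2 d1ρp d1ρm V RRρ : ℝ → T2 → ℝ)
    -- periodicity with slope `L` in `x₁` and periodicity in `x₂`
    (hper : ∀ t ∈ Set.Ico (0:ℝ) T, ∀ x : ℝ × ℝ,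
      ρp t (x.1 + 1, x.2) = ρp t x + L ∧ ρp t (x.1, x.2 + 1) = ρp t x ∧
      ρm t (x.1 + 1, x.2) = ρm t x + L ∧ ρm t (x.1, x.2 + 1) = ρm t x)
    -- `ρ = ρ⁺ − ρ⁻` is `ℤ²`-periodic, descending to `ρT2` on the torus
    (hdesc : ∀ t ∈ Set.Ico (0:ℝ) T, ∀ x : ℝ × ℝ, ρT2 t (pr x) = ρp t x - ρm t x)
    -- `d1ρ^± = ∂ρ^±/∂x₁` (fundamental theorem of calculus in `x₁`)
    (hd1 : ∀ t ∈ Set.Ico (0:ℝ) T, ∀ (x₂ a b : ℝ),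
      ρp t (b, x₂) - ρp t (a, x₂) = (∫ u in a..b, d1ρp t (pr (u, x₂))) ∧
      ρm t (b, x₂) - ρm t (a, x₂) = (∫ u in a..b, d1ρm t (pr (u, x₂))))
    -- nonnegative dislocation densities
    (hpos : ∀ t ∈ Set.Ico (0:ℝ) T, ∀ y : T2, 0 ≤ d1ρp t y ∧ 0 ≤ d1ρm t y)
    -- time derivatives
    (hdt : ∀ x : ℝ × ℝ, ∀ t ∈ Set.Ioo (0:ℝ) T,
      HasDerivAt (fun s => ρp s x) (ρpt t x) t ∧
      HasDerivAt (fun s => ρm s x) (ρmt t x) t)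
    -- `V = R₁²R₂²ρ`
    (hV : ∀ t ∈ Set.Ico (0:ℝ) T, ∀ k : ℤ × ℤ,
      fcR (V t) k = ((rieszSymbol 0 k : ℂ))^2 * ((rieszSymbol 1 k : ℂ))^2 * fcR (ρT2 t) k)
    -- `RRρ = R₁R₂ρ`
    (hRR : ∀ t ∈ Set.Ico (0:ℝ) T, ∀ k : ℤ × ℤ,
      fcR (RRρ t) k = (rieszSymbol 0 k : ℂ) * (rieszSymbol 1 k : ℂ) * fcR (ρT2 t) k)
    -- the transport equations `∂ρ^±/∂t = ∓(R₁²R₂²ρ) ∂ρ^±/∂x₁`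
    (hPDE : ∀ t ∈ Set.Ico (0:ℝ) T, ∀ x : ℝ × ℝ,
      ρpt t x = -(V t (pr x)) * d1ρp t (pr x) ∧
      ρmt t x = (V t (pr x)) * d1ρm t (pr x))
    -- continuity of the data
    (hcont : Continuous (fun q : ℝ × T2 => RRρ q.1 q.2) ∧
      Continuous (fun q : ℝ × T2 => V q.1 q.2) ∧
      Continuous (fun q : ℝ × T2 => d1ρp q.1 q.2) ∧
      Continuous (fun q : ℝ × T2 => d1ρm q.1 q.2) ∧
      ∀ t ∈ Set.Ico (0:ℝ) T, Continuous (ρT2 t)) :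
    ∀ t ∈ Set.Ico (0:ℝ) T,
      (1/2) * (∫ y : T2, (RRρ t y)^2)
        + (∫ s in (0:ℝ)..t, ∫ y : T2, (V s y)^2 * (d1ρp s y + d1ρm s y))
      ≤ (1/2) * ∫ y : T2, (RRρ 0 y)^2 := by
  classical
  obtain ⟨hcRR, hcV, hcd1p, hcd1m, hcρ⟩ := hcont
  have cRR : ∀ s : ℝ, Continuous (RRρ s) := fun s => hcRR.comp (Continuous.prodMk_right s)
  have cV : ∀ s : ℝ, Continuous (V s) := fun s => hcV.comp (Continuous.prodMk_right s)
  set G : ℝ → ℝ := fun s => ∫ y : T2, (RRρ s y)^2 with hGdef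
  set D : ℝ → ℝ := fun s => ∫ y : T2, (V s y)^2 * (d1ρp s y + d1ρm s y) with hDdef
  have contG : Continuous G := T2F.cont_param_integral _ (hcRR.pow 2)
  have contD : Continuous D :=
    T2F.cont_param_integral _ ((hcV.pow 2).mul (hcd1p.add hcd1m))
  -- Step 1 : polarization + Parseval transfer
  have key : ∀ u ∈ Set.Ico (0:ℝ) T, ∀ s ∈ Set.Ico (0:ℝ) T,
      G u - G s = ∫ y : T2, (V u y + V s y) * (ρT2 u y - ρT2 s y) := by
    intro u hu s hs
    have i1 : Integrable (fun y : T2 => (RRρ u y)^2) volume :=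
      T2F.cont_integrable ((cRR u).pow 2)
    have i2 : Integrable (fun y : T2 => (RRρ s y)^2) volume :=
      T2F.cont_integrable ((cRR s).pow 2)
    have e1 : G u - G s
        = ∫ y : T2, (RRρ u y + RRρ s y) * (RRρ u y - RRρ s y) := by
      rw [hGdef]
      simp only
      rw [← integral_sub i1 i2]
      congr 1
      funext y
      ring
    rw [e1]
    apply T2F.pairing_transfer _ _ _ _
      ((cRR u).add (cRR s)) ((cRR u).sub (cRR s))
      ((cV u).add (cV s)) ((hcρ u hu).sub (hcρ s hs))
    intro k
    simp only [Pi.add_def, Pi.sub_def]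
    have hru := hRR u hu k
    have hrs := hRR s hs k
    have hvu := hV u hu k
    have hvs := hV s hs k
    rw [T2F.fcR_add _ _ (cRR u) (cRR s), T2F.fcR_sub _ _ (cRR u) (cRR s),
        T2F.fcR_add _ _ (cV u) (cV s), T2F.fcR_sub _ _ (hcρ u hu) (hcρ s hs),
        hru, hrs, hvu, hvs]
    simp only [map_add, map_mul, map_sub, map_pow, Complex.conj_ofReal]
    ring
  -- Step 2 : the derivative of the energy
  have hderiv : ∀ s ∈ Set.Ioo (0:ℝ) T, HasDerivAt G (-2 * D s) s := by
    intro s hs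
    have hs' : s ∈ Set.Ico (0:ℝ) T := ⟨hs.1.le, hs.2⟩
    set δ : ℝ := min s (T - s) / 2 with hδdef
    have hminl := min_le_left s (T - s)
    have hminr := min_le_right s (T - s)
    have hδpos : 0 < δ := by
      have h1 := hs.1
      have h2 := hs.2
      apply div_pos (lt_min (by linarith) (by linarith)) two_pos
    have hδ1 : δ ≤ s / 2 := by rw [hδdef]; linarith
    have hδ2 : δ ≤ (T - s) / 2 := by rw [hδdef]; linarith
    have hJsub : Set.Icc (s - δ) (s + δ) ⊆ Set.Ioo 0 T := by
      intro τ hτ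
      have h1 := hτ.1
      have h2 := hτ.2
      have h3 := hs.1
      have h4 := hs.2
      exact ⟨by linarith, by linarith⟩
    have hss : s ∈ Set.Icc (s - δ) (s + δ) := ⟨by linarith, by linarith⟩
    obtain ⟨CV, hCV⟩ :=
      ((isCompact_Icc (a := s - δ) (b := s + δ)).prod
        isCompact_univ).exists_bound_of_continuousOn hcV.continuousOn
    obtain ⟨M, hM⟩ :=
      ((isCompact_Icc (a := s - δ) (b := s + δ)).prod
        isCompact_univ).exists_bound_of_continuousOn
        ((hcV.mul (hcd1p.add hcd1m)).continuousOn)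
    have hCV0 : 0 ≤ CV := le_trans (norm_nonneg _) (hCV (s, pr (0, 0)) ⟨hss, Set.mem_univ _⟩)
    have hM0 : 0 ≤ M := le_trans (norm_nonneg _) (hM (s, pr (0, 0)) ⟨hss, Set.mem_univ _⟩)
    -- the mean value bound on difference quotients
    have hMVT : ∀ u ∈ Set.Icc (s - δ) (s + δ), ∀ x : ℝ × ℝ,
        |(ρp u x - ρm u x) - (ρp s x - ρm s x)| ≤ M * |u - s| := by
      intro u hu x
      have hder : ∀ τ ∈ Set.Icc (s - δ) (s + δ),
          HasDerivWithinAt (fun τ => ρp τ x - ρm τ x)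
            (ρpt τ x - ρmt τ x) (Set.Icc (s - δ) (s + δ)) τ := by
        intro τ hτ
        have h := hdt x τ (hJsub hτ)
        exact (h.1.sub h.2).hasDerivWithinAt
      have hbound : ∀ τ ∈ Set.Icc (s - δ) (s + δ), ‖ρpt τ x - ρmt τ x‖ ≤ M := by
        intro τ hτ
        have hτ' : τ ∈ Set.Ico (0:ℝ) T := ⟨(hJsub hτ).1.le, (hJsub hτ).2⟩
        have hpde := hPDE τ hτ' x
        have hx : ρpt τ x - ρmt τ x
            = -(V τ (pr x) * (d1ρp τ (pr x) + d1ρm τ (pr x))) := by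
          rw [hpde.1, hpde.2]; ring
        rw [hx, norm_neg]
        exact hM (τ, pr x) ⟨hτ, Set.mem_univ _⟩
      have := Convex.norm_image_sub_le_of_norm_hasDerivWithin_le hder hbound
        (convex_Icc _ _) hss hu
      simpa [Real.norm_eq_abs] using this
    have hJs : Set.Icc (s - δ) (s + δ) ∈ nhdsWithin s {s}ᶜ :=
      nhdsWithin_le_nhds (Icc_mem_nhds (by linarith) (by linarith))
    -- dominated convergence for the difference quotient
    have htend : Filter.Tendsto
        (fun u => ∫ y : T2, (V u y + V s y) * ((ρT2 u y - ρT2 s y) / (u - s)))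
        (nhdsWithin s {s}ᶜ)
        (nhds (∫ y : T2, (V s y + V s y) * (-(V s y) * (d1ρp s y + d1ρm s y)))) := by
      apply MeasureTheory.tendsto_integral_filter_of_dominated_convergence
        (bound := fun _ : T2 => (CV + CV) * M)
      · filter_upwards [hJs] with u hu
        have hu' : u ∈ Set.Ico (0:ℝ) T := ⟨(hJsub hu).1.le, (hJsub hu).2⟩
        exact (((cV u).add (cV s)).mul
          (((hcρ u hu').sub (hcρ s hs')).div_const _)).aestronglyMeasurable
      · filter_upwards [hJs, self_mem_nhdsWithin] with u hu hne
        apply Filter.Eventually.of_forall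
        intro y
        obtain ⟨x, rfl⟩ := T2F.pr_surj y
        have hu' : u ∈ Set.Ico (0:ℝ) T := ⟨(hJsub hu).1.le, (hJsub hu).2⟩
        rw [hdesc u hu' x, hdesc s hs' x]
        rw [Real.norm_eq_abs, abs_mul]
        have b1 : |V u (pr x) + V s (pr x)| ≤ CV + CV :=
          (abs_add_le _ _).trans (add_le_add
            (hCV (u, pr x) ⟨hu, Set.mem_univ _⟩)
            (hCV (s, pr x) ⟨hss, Set.mem_univ _⟩))
        have hne' : u - s ≠ 0 := sub_ne_zero.mpr hne
        have b2 : |(ρp u x - ρm u x - (ρp s x - ρm s x)) / (u - s)| ≤ M := by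
          rw [abs_div, div_le_iff₀ (abs_pos.mpr hne')]
          exact hMVT u hu x
        exact mul_le_mul b1 b2 (abs_nonneg _) (by linarith)
      · exact integrable_const _
      · apply Filter.Eventually.of_forall
        intro y
        obtain ⟨x, rfl⟩ := T2F.pr_surj y
        have hdts := hdt x s hs
        have hφ : HasDerivAt (fun τ => ρp τ x - ρm τ x) (ρpt s x - ρmt s x) s :=
          hdts.1.sub hdts.2
        have hslope := hasDerivAt_iff_tendsto_slope.mp hφ
        have hEE : slope (fun τ => ρp τ x - ρm τ x) s =ᶠ[nhdsWithin s {s}ᶜ]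
            (fun u => (ρT2 u (pr x) - ρT2 s (pr x)) / (u - s)) := by
          filter_upwards [hJs] with u hu
          have hu' : u ∈ Set.Ico (0:ℝ) T := ⟨(hJsub hu).1.le, (hJsub hu).2⟩
          rw [slope_def_field, hdesc u hu' x, hdesc s hs' x]
        have hlim2 : Filter.Tendsto
            (fun u => (ρT2 u (pr x) - ρT2 s (pr x)) / (u - s))
            (nhdsWithin s {s}ᶜ) (nhds (ρpt s x - ρmt s x)) :=
          hslope.congr' hEE
        have hVt : Filter.Tendsto (fun u => V u (pr x) + V s (pr x))
            (nhdsWithin s {s}ᶜ) (nhds (V s (pr x) + V s (pr x))) :=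
          (((hcV.comp (continuous_id.prodMk continuous_const)).continuousAt).add
            tendsto_const_nhds).mono_left nhdsWithin_le_nhds
        have hmul := hVt.mul hlim2
        have hval : ρpt s x - ρmt s x
            = -(V s (pr x)) * (d1ρp s (pr x) + d1ρm s (pr x)) := by
          rw [(hPDE s hs' x).1, (hPDE s hs' x).2]; ring
        rw [hval] at hmul
        exact hmul
    -- identify with the slope of G
    rw [hasDerivAt_iff_tendsto_slope]
    have hGslope : (fun u => ∫ y : T2, (V u y + V s y) * ((ρT2 u y - ρT2 s y) / (u - s)))
        =ᶠ[nhdsWithin s {s}ᶜ] slope G s := by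
      filter_upwards [hJs, self_mem_nhdsWithin] with u hu hne
      have hu' : u ∈ Set.Ico (0:ℝ) T := ⟨(hJsub hu).1.le, (hJsub hu).2⟩
      rw [slope_def_field, key u hu' s hs', ← integral_div]
      congr 1
      funext y
      rw [mul_div_assoc]
    have hLval : (∫ y : T2, (V s y + V s y) * (-(V s y) * (d1ρp s y + d1ρm s y)))
        = -2 * D s := by
      rw [hDdef]
      simp only
      rw [← MeasureTheory.integral_const_mul]
      congr 1
      funext y
      ring
    rw [hLval] at htend
    exact htend.congr' hGslope
  -- Step 3 : fundamental theorem of calculus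
  intro t ht
  have hInt : IntervalIntegrable (fun x => -2 * D x) volume 0 t :=
    (continuous_const.mul contD).intervalIntegrable 0 t
  have hFTC := intervalIntegral.integral_eq_sub_of_hasDerivAt_of_le ht.1
      contG.continuousOn (fun x hx => hderiv x ⟨hx.1, hx.2.trans ht.2⟩) hInt
  rw [intervalIntegral.integral_const_mul] at hFTC
  have hDt : (∫ s in (0:ℝ)..t, ∫ y : T2, (V s y)^2 * (d1ρp s y + d1ρm s y))
      = ∫ s in (0:ℝ)..t, D s := by rw [hDdef]
  have hGt : (∫ y : T2, (RRρ t y)^2) = G t := by rw [hGdef]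
  have hG0 : (∫ y : T2, (RRρ 0 y)^2) = G 0 := by rw [hGdef]
  rw [hGt, hG0, hDt]
  linarith [hFTC]
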